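/- arXiv:1405.7107 — 4 statements merged into one kernel-verified Lean document; each statement's English description precedes it below -/
import Mathlib

section
/- Let a > 0 and let f, g ∈ L¹(0,∞) ∩ L²(0,∞), and let q(t) = ∫_0^t g(t−τ) f(τ) dτ be their Laplace convolution. Then for every integer k ≥ 0 the Laguerre coefficients satisfy q^{(k)} = (2a)^{−1/2} [ g^{(0)} f^{(k)} + ∑_{ℓ=0}^{k−1} (g^{(k−ℓ)} − g^{(k−ℓ−1)}) f^{(ℓ)} ]. Equivalently, for every m ≥ 1, q_m = G_m f_m, where q_m = (q^{(0)},…,q^{(m−1)})ᵀ, f_m = (f^{(0)},…,f^{(m−1)})ᵀ, and G_m is the m×m lower triangular Toeplitz matrix whose first column is (g^{(0)}, g^{(1)}−g^{(0)}, …, g^{(m−1)}−g^{(m−2)})ᵀ/√(2a). -/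
open MeasureTheory Matrix Finset Filter Topology

noncomputable section

namespace LapDeconv

/-- Laguerre polynomial `L_k(t) = ∑_{j=0}^k (-1)^j (k choose j) t^j / j!`. -/
def laguerreL (k : ℕ) (t : ℝ) : ℝ :=
  ∑ j ∈ Finset.range (k + 1), (-1 : ℝ) ^ j * (k.choose j : ℝ) * t ^ j / (Nat.factorial j : ℝ)

/-- Laguerre function `φ_k(t) = √(2a) e^{-at} L_k(2at)`. -/
def lagFun (a : ℝ) (k : ℕ) (t : ℝ) : ℝ :=
  Real.sqrt (2 * a) * Real.exp (-(a * t)) * laguerreL k (2 * a * t)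

/-- Laguerre coefficient `h^{(k)} = ∫_0^∞ h(t) φ_k(t) dt`. -/
def lagCoeff (a : ℝ) (h : ℝ → ℝ) (k : ℕ) : ℝ :=
  ∫ t in Set.Ioi (0 : ℝ), h t * lagFun a k t

/-- Laplace convolution `q(t) = ∫_0^t g(t-τ) f(τ) dτ`. -/
def conv (g f : ℝ → ℝ) (t : ℝ) : ℝ := ∫ τ in (0 : ℝ)..t, g (t - τ) * f τ

/-- Squared L²(0,∞) distance between two functions. -/
def distSq (u v : ℝ → ℝ) : ℝ := ∫ x in Set.Ioi (0 : ℝ), (u x - v x) ^ 2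

/-- The design matrix `Φ_M` with entries `φ_k(t_i)`. -/
def PhiMat (a : ℝ) {n : ℕ} (M : ℕ) (t : Fin n → ℝ) : Matrix (Fin n) (Fin M) ℝ :=
  Matrix.of fun i k => lagFun a (k : ℕ) (t i)

/-- First column of the Toeplitz matrix `G_m`. -/
def toepCol (a : ℝ) (g : ℝ → ℝ) (k : ℕ) : ℝ :=
  (if k = 0 then lagCoeff a g 0 else lagCoeff a g k - lagCoeff a g (k - 1)) / Real.sqrt (2 * a)

/-- The lower triangular Toeplitz matrix `G_m`. -/
def Gmat (a : ℝ) (g : ℝ → ℝ) (m : ℕ) : Matrix (Fin m) (Fin m) ℝ :=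
  Matrix.of fun i j => if (j : ℕ) ≤ (i : ℕ) then toepCol a g ((i : ℕ) - (j : ℕ)) else 0

/-- The truncation matrix `J_{m,M} = (Id_m 0)`. -/
def Jmat (m M : ℕ) : Matrix (Fin m) (Fin M) ℝ :=
  Matrix.of fun i j => if (j : ℕ) = (i : ℕ) then 1 else 0

/-- Upper-left `m × m` block of an `M × M` matrix. -/
def topLeft {M : ℕ} (B : Matrix (Fin M) (Fin M) ℝ) (m : ℕ) : Matrix (Fin m) (Fin m) ℝ :=
  Matrix.of fun i j =>
    if h : (i : ℕ) < M ∧ (j : ℕ) < M then B ⟨(i : ℕ), h.1⟩ ⟨(j : ℕ), h.2⟩ else 0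

/-- `Q_m = (n/T) [(Φᵀ Φ)⁻¹]_m ([G_M G_Mᵀ]_m)⁻¹`. -/
def Qmat (a : ℝ) {n : ℕ} (M : ℕ) (t : Fin n → ℝ) (T : ℝ) (g : ℝ → ℝ) (m : ℕ) :
    Matrix (Fin m) (Fin m) ℝ :=
  ((n : ℝ) / T) • (topLeft ((PhiMat a M t)ᵀ * PhiMat a M t)⁻¹ m *
    (topLeft (Gmat a g M * (Gmat a g M)ᵀ) m)⁻¹)

/-- `A_m = √(n/T) G_m⁻¹ J_{m,M} (Φᵀ Φ)⁻¹ Φᵀ`. -/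
def Amat (a : ℝ) {n : ℕ} (M : ℕ) (t : Fin n → ℝ) (T : ℝ) (g : ℝ → ℝ) (m : ℕ) :
    Matrix (Fin m) (Fin n) ℝ :=
  Real.sqrt ((n : ℝ) / T) •
    ((Gmat a g m)⁻¹ * Jmat m M * ((PhiMat a M t)ᵀ * PhiMat a M t)⁻¹ * (PhiMat a M t)ᵀ)

/-- Squared Frobenius norm `‖B‖_F² = Tr(Bᵀ B)`. -/
def frobSq {k l : ℕ} (B : Matrix (Fin k) (Fin l) ℝ) : ℝ := Matrix.trace (Bᵀ * B)

/-- Largest eigenvalue of a symmetric matrix, as the supremum of its Rayleigh quotient over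
unit vectors. -/
def lambdaMax {N : ℕ} (B : Matrix (Fin N) (Fin N) ℝ) : ℝ :=
  sSup {r : ℝ | ∃ v : Fin N → ℝ, (∑ i, v i ^ 2) = 1 ∧ r = v ⬝ᵥ B.mulVec v}

/-- `v_m² = ‖A_m‖_F²`. -/
def vSq (a : ℝ) {n : ℕ} (M : ℕ) (t : Fin n → ℝ) (T : ℝ) (g : ℝ → ℝ) (m : ℕ) : ℝ :=
  frobSq (Amat a M t T g m)

/-- `ρ_m² = λ_max(A_mᵀ A_m)`. -/
def rhoSq (a : ℝ) {n : ℕ} (M : ℕ) (t : Fin n → ℝ) (T : ℝ) (g : ℝ → ℝ) (m : ℕ) : ℝ :=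
  lambdaMax ((Amat a M t T g m)ᵀ * Amat a M t T g m)

/-- The penalty `pen(m) = 8σ²(T/n)[v_m² + 2κ ρ_m² log(m ρ_m/ρ₁)]`. -/
def pen (a : ℝ) {n : ℕ} (M : ℕ) (t : Fin n → ℝ) (T σ κ : ℝ) (g : ℝ → ℝ) (m : ℕ) : ℝ :=
  8 * σ ^ 2 * (T / n) * (vSq a M t T g m +
    2 * κ * rhoSq a M t T g m *
      Real.log ((m : ℝ) * Real.sqrt (rhoSq a M t T g m) / Real.sqrt (rhoSq a M t T g 1)))

/-- `τ(m,m') = 2(T/n)[v²_{m*} + 2κ ρ²_{m*} log(m* ρ_{m*}/ρ₁)]`, `m* = m ∨ m'`. -/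
def tau (a : ℝ) {n : ℕ} (M : ℕ) (t : Fin n → ℝ) (T κ : ℝ) (g : ℝ → ℝ) (m m' : ℕ) : ℝ :=
  2 * (T / n) * (vSq a M t T g (max m m') +
    2 * κ * rhoSq a M t T g (max m m') *
      Real.log (((max m m' : ℕ) : ℝ) * Real.sqrt (rhoSq a M t T g (max m m')) /
        Real.sqrt (rhoSq a M t T g 1)))

/-- Coefficient vector of the estimator, `f̂_m = G_m⁻¹ J_{m,M} (ΦᵀΦ)⁻¹ Φᵀ y`. -/
def fhatCoef (a : ℝ) {n : ℕ} (M : ℕ) (t : Fin n → ℝ) (g : ℝ → ℝ) (m : ℕ)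
    (y : Fin n → ℝ) : Fin m → ℝ :=
  ((Gmat a g m)⁻¹ * Jmat m M * ((PhiMat a M t)ᵀ * PhiMat a M t)⁻¹ *
    (PhiMat a M t)ᵀ).mulVec y

/-- The estimator `f̂_m(x) = ∑_{k<m} (f̂_m)_k φ_k(x)`. -/
def fhatFun (a : ℝ) {n : ℕ} (M : ℕ) (t : Fin n → ℝ) (g : ℝ → ℝ) (m : ℕ)
    (y : Fin n → ℝ) (x : ℝ) : ℝ :=
  ∑ k : Fin m, fhatCoef a M t g m y k * lagFun a (k : ℕ) x

/-- The projection `f_m = ∑_{k<m} f^{(k)} φ_k`. -/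
def projFun (a : ℝ) (f : ℝ → ℝ) (m : ℕ) (x : ℝ) : ℝ :=
  ∑ k ∈ Finset.range m, lagCoeff a f k * lagFun a k x

/-- The model-selection criterion `-‖f̂_m‖² + pen(m)`. -/
def crit (a : ℝ) {n : ℕ} (M : ℕ) (t : Fin n → ℝ) (T σ κ : ℝ) (g : ℝ → ℝ) (m : ℕ)
    (y : Fin n → ℝ) : ℝ :=
  -(∑ k : Fin m, fhatCoef a M t g m y k ^ 2) + pen a M t T σ κ g m

/-- `sup_{t ∈ S_m, ‖t‖ = 1} ⟨t, G_M⁻¹ (ΦᵀΦ)⁻¹ Φᵀ e⟩²`, where `S_m ⊆ ℝ^M` is the subspace of`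
vectors with coordinates of index `≥ m` vanishing. -/
def supTerm (a : ℝ) {n : ℕ} (M : ℕ) (t : Fin n → ℝ) (g : ℝ → ℝ) (m : ℕ)
    (e : Fin n → ℝ) : ℝ :=
  sSup {r : ℝ | ∃ v : Fin M → ℝ, (∀ j : Fin M, m ≤ (j : ℕ) → v j = 0) ∧
    (∑ j, v j ^ 2) = 1 ∧
    r = (v ⬝ᵥ ((Gmat a g M)⁻¹ * ((PhiMat a M t)ᵀ * PhiMat a M t)⁻¹ *
          (PhiMat a M t)ᵀ).mulVec e) ^ 2}

end LapDeconv


namespace LapDeconv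

lemma key_nat : ∀ (m q r : ℕ), ∑ l ∈ range (m+1), (l.choose q) * ((m-l).choose r) = (m+1).choose (q+r+1) := by
  have hock : ∀ (n q : ℕ), ∑ l ∈ range (n+1), l.choose q = (n+1).choose (q+1) := by
    intro n q
    rw [← Nat.sum_Icc_choose n q]
    apply (Finset.sum_subset ?_ ?_).symm
    · intro x hx; simp only [mem_Icc] at hx; exact mem_range.mpr (by omega)
    · intro x hx1 hx; simp only [mem_Icc, not_and, not_le] at hx; simp only [mem_range] at hx1
      rcases le_or_gt q x with h | h
      · omega
      · exact Nat.choose_eq_zero_of_lt h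
  intro m
  induction m with
  | zero =>
    intro q r
    simp only [zero_add, range_one, sum_singleton, Nat.zero_sub]
    rcases Nat.eq_zero_or_pos q with rfl | hq
    · rcases Nat.eq_zero_or_pos r with rfl | hr
      · simp
      · rw [Nat.choose_eq_zero_of_lt (by omega : 1 < 0+r+1), Nat.choose_eq_zero_of_lt hr]; ring
    · rw [Nat.choose_eq_zero_of_lt (by omega : 1 < q+r+1), Nat.choose_eq_zero_of_lt hq]; ring
  | succ m ih =>
    intro q r
    cases r with
    | zero => simpa using hock (m+1) q
    | succ r =>
      rw [Finset.sum_range_succ]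
      have h0 : (m+1-(m+1)).choose (r+1) = 0 := by simp
      rw [h0, Nat.mul_zero, add_zero]
      have : ∀ l ∈ range (m+1), l.choose q * ((m+1-l).choose (r+1))
          = l.choose q * ((m-l).choose (r+1)) + l.choose q * ((m-l).choose r) := by
        intro l hl; simp only [mem_range] at hl
        have : m + 1 - l = (m - l) + 1 := by omega
        rw [this, Nat.choose_succ_succ, Nat.mul_add]; ring
      rw [Finset.sum_congr rfl this, Finset.sum_add_distrib, ih q (r+1), ih q r]
      have e1 : q + (r+1) + 1 = q + r + 1 + 1 := by ring
      rw [e1, Nat.choose_succ_succ (m+1) (q+r+1)]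
      simp only [Nat.succ_eq_add_one]
      omega
lemma laguerreL_zero (x : ℝ) : laguerreL 0 x = 1 := by simp [laguerreL]

lemma laguerreL_pad (k n : ℕ) (h : k ≤ n) (x : ℝ) :
    laguerreL k x = ∑ j ∈ range (n+1), (-1 : ℝ)^j * (k.choose j : ℝ) * x^j / (Nat.factorial j : ℝ) := by
  unfold laguerreL
  apply Finset.sum_subset (Finset.range_subset_range.mpr (by omega))
  intro j hj hj'
  simp only [mem_range] at hj hj'
  rw [Nat.choose_eq_zero_of_lt (by omega)]
  simp

lemma laguerre_sub (m : ℕ) (x : ℝ) :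
    laguerreL (m+1) x - laguerreL m x
      = ∑ p ∈ range (m+1), (-1 : ℝ)^(p+1) * (m.choose p : ℝ) * x^(p+1) / (Nat.factorial (p+1) : ℝ) := by
  rw [laguerreL_pad m (m+1) (by omega), laguerreL]
  rw [Finset.sum_range_succ' _ (m+1),
    Finset.sum_range_succ' (fun j => (-1 : ℝ)^j * (m.choose j : ℝ) * x^j / (Nat.factorial j : ℝ)) (m+1)]
  have h0 : (-1 : ℝ)^0 * (((m+1).choose 0 : ℕ) : ℝ) * x^0 / ((Nat.factorial 0 : ℕ) : ℝ)
      = (-1 : ℝ)^0 * ((m.choose 0 : ℕ) : ℝ) * x^0 / ((Nat.factorial 0 : ℕ) : ℝ) := by simp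
  rw [h0, add_sub_add_right_eq_sub, ← Finset.sum_sub_distrib]
  apply Finset.sum_congr rfl
  intro p hp
  rw [Nat.choose_succ_succ m p]
  push_cast
  ring

lemma factS (p q : ℕ) : (((p+q).choose p : ℕ) : ℝ) * ((Nat.factorial p : ℝ) * (Nat.factorial q : ℝ))
    = (Nat.factorial (p+q) : ℝ) := by
  have h := Nat.choose_mul_factorial_mul_factorial (Nat.le_add_right p q)
  rw [Nat.add_sub_cancel_left] at h
  have h2 : (((p+q).choose p * Nat.factorial p * Nat.factorial q : ℕ) : ℝ)
      = ((Nat.factorial (p+q) : ℕ) : ℝ) := by exact_mod_cast congrArg (Nat.cast (R := ℝ)) h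
  push_cast at h2 ⊢
  linarith [h2, mul_assoc (((p+q).choose p : ℕ) : ℝ) (Nat.factorial p : ℝ) (Nat.factorial q : ℝ)]

lemma claimA (k : ℕ) (x y : ℝ) :
    laguerreL k (x + y) = ∑ p ∈ range (k+1), ∑ q ∈ range (k+1),
      (-1 : ℝ)^(p+q) * (k.choose (p+q) : ℝ) * x^p * y^q
        / ((Nat.factorial p : ℝ) * (Nat.factorial q : ℝ)) := by
  unfold laguerreL
  have hbin : ∀ j ∈ range (k+1),
      (-1 : ℝ)^j * (k.choose j : ℝ) * (x+y)^j / (Nat.factorial j : ℝ)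
        = ∑ p ∈ range (k+1),
            (-1 : ℝ)^j * (k.choose j : ℝ) * ((j.choose p : ℝ) * x^p * y^(j-p)) / (Nat.factorial j : ℝ) := by
    intro j hj
    simp only [mem_range] at hj
    have hb : (x+y)^j = ∑ p ∈ range (k+1), x^p * y^(j-p) * (j.choose p : ℝ) := by
      rw [add_pow]
      apply Finset.sum_subset (Finset.range_subset_range.mpr (by omega))
      intro p hp hp'
      simp only [mem_range] at hp hp'
      rw [Nat.choose_eq_zero_of_lt (by omega)]
      push_cast
      ring
    rw [hb, Finset.mul_sum, Finset.sum_div]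
    apply Finset.sum_congr rfl
    intro p _
    ring
  rw [Finset.sum_congr rfl hbin, Finset.sum_comm]
  apply Finset.sum_congr rfl
  intro p hp
  simp only [mem_range] at hp
  have step1 : ∑ j ∈ range (k+1),
      (-1 : ℝ)^j * (k.choose j : ℝ) * ((j.choose p : ℝ) * x^p * y^(j-p)) / (Nat.factorial j : ℝ)
      = ∑ j ∈ Ico p (k+1),
      (-1 : ℝ)^j * (k.choose j : ℝ) * ((j.choose p : ℝ) * x^p * y^(j-p)) / (Nat.factorial j : ℝ) := by
    apply (Finset.sum_subset ?_ ?_).symm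
    · intro j hj; simp only [mem_Ico] at hj; exact mem_range.mpr hj.2
    · intro j hj hj'
      simp only [mem_range] at hj
      simp only [mem_Ico, not_and, not_lt] at hj'
      rcases lt_or_ge j p with h | h
      · rw [Nat.choose_eq_zero_of_lt h]; push_cast; ring
      · omega
  rw [step1, Finset.sum_Ico_eq_sum_range]
  have step2 : ∑ q ∈ range (k+1-p),
      (-1 : ℝ)^(p+q) * (k.choose (p+q) : ℝ) * (((p+q).choose p : ℝ) * x^p * y^((p+q)-p)) / (Nat.factorial (p+q) : ℝ)
      = ∑ q ∈ range (k+1),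
      (-1 : ℝ)^(p+q) * (k.choose (p+q) : ℝ) * (((p+q).choose p : ℝ) * x^p * y^((p+q)-p)) / (Nat.factorial (p+q) : ℝ) := by
    apply Finset.sum_subset (Finset.range_subset_range.mpr (by omega))
    intro q hq hq'
    simp only [mem_range] at hq hq'
    rw [Nat.choose_eq_zero_of_lt (show k < p+q by omega)]
    push_cast; ring
  rw [step2]
  apply Finset.sum_congr rfl
  intro q hq
  rw [Nat.add_sub_cancel_left]
  have h1 : (Nat.factorial (p+q) : ℝ) ≠ 0 := Nat.cast_ne_zero.mpr (Nat.factorial_ne_zero _)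
  have h2 : (Nat.factorial p : ℝ) ≠ 0 := Nat.cast_ne_zero.mpr (Nat.factorial_ne_zero _)
  have h3 : (Nat.factorial q : ℝ) ≠ 0 := Nat.cast_ne_zero.mpr (Nat.factorial_ne_zero _)
  have h := factS p q
  field_simp
  linear_combination ((k.choose (p+q) : ℝ) * x^p * y^q) * h

lemma laguerre_add (k : ℕ) (x y : ℝ) :
    laguerreL k (x + y) = (∑ l ∈ range k,
        laguerreL l y * (laguerreL (k-l) x - laguerreL (k-l-1) x)) + laguerreL k y * laguerreL 0 x := by
  cases k with
  | zero => simp [laguerreL_zero]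
  | succ K =>
    rw [claimA]
    rw [Finset.sum_range_succ' _ (K+1)]
    congr 1
    · -- main double sum
      have hrhs : ∀ l ∈ range (K+1),
          laguerreL l y * (laguerreL (K+1-l) x - laguerreL (K+1-l-1) x)
          = ∑ q ∈ range (K+2), ∑ p ∈ range (K+1),
              ((-1 : ℝ)^q * (l.choose q : ℝ) * y^q / (Nat.factorial q : ℝ))
              * ((-1 : ℝ)^(p+1) * ((K-l).choose p : ℝ) * x^(p+1) / (Nat.factorial (p+1) : ℝ)) := by
        intro l hl
        simp only [mem_range] at hl
        have e1 : K+1-l = (K-l)+1 := by omega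
        have e2 : K-l+1-1 = K-l := by omega
        rw [e1, e2, laguerre_sub (K-l) x, laguerreL_pad l (K+1) (by omega) y]
        have hpad : ∑ p ∈ range (K-l+1), (-1 : ℝ)^(p+1) * ((K-l).choose p : ℝ) * x^(p+1) / (Nat.factorial (p+1) : ℝ)
            = ∑ p ∈ range (K+1), (-1 : ℝ)^(p+1) * ((K-l).choose p : ℝ) * x^(p+1) / (Nat.factorial (p+1) : ℝ) := by
          apply Finset.sum_subset (Finset.range_subset_range.mpr (by omega))
          intro p hp hp'
          simp only [mem_range] at hp hp'
          rw [Nat.choose_eq_zero_of_lt (by omega)]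
          push_cast; ring
        rw [hpad, Finset.sum_mul_sum]
      apply Eq.symm
      calc ∑ l ∈ range (K+1), laguerreL l y * (laguerreL (K+1-l) x - laguerreL (K+1-l-1) x)
          = ∑ l ∈ range (K+1), ∑ q ∈ range (K+2), ∑ p ∈ range (K+1),
              ((-1 : ℝ)^q * (l.choose q : ℝ) * y^q / (Nat.factorial q : ℝ))
              * ((-1 : ℝ)^(p+1) * ((K-l).choose p : ℝ) * x^(p+1) / (Nat.factorial (p+1) : ℝ)) :=
            Finset.sum_congr rfl hrhs
        _ = ∑ q ∈ range (K+2), ∑ l ∈ range (K+1), ∑ p ∈ range (K+1),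
              ((-1 : ℝ)^q * (l.choose q : ℝ) * y^q / (Nat.factorial q : ℝ))
              * ((-1 : ℝ)^(p+1) * ((K-l).choose p : ℝ) * x^(p+1) / (Nat.factorial (p+1) : ℝ)) :=
            Finset.sum_comm
        _ = ∑ q ∈ range (K+2), ∑ p ∈ range (K+1), ∑ l ∈ range (K+1),
              ((-1 : ℝ)^q * (l.choose q : ℝ) * y^q / (Nat.factorial q : ℝ))
              * ((-1 : ℝ)^(p+1) * ((K-l).choose p : ℝ) * x^(p+1) / (Nat.factorial (p+1) : ℝ)) :=
            Finset.sum_congr rfl (fun q _ => Finset.sum_comm)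
        _ = ∑ q ∈ range (K+2), ∑ p ∈ range (K+1),
              (-1 : ℝ)^((p+1)+q) * ((K+1).choose ((p+1)+q) : ℝ) * x^(p+1) * y^q
                / ((Nat.factorial (p+1) : ℝ) * (Nat.factorial q : ℝ)) := by
            apply Finset.sum_congr rfl
            intro q _
            apply Finset.sum_congr rfl
            intro p _
            have e : q+p+1 = p+1+q := by omega
            have hk : ((∑ l ∈ range (K+1), l.choose q * ((K-l).choose p) : ℕ) : ℝ)
                = (((K+1).choose (p+1+q) : ℕ) : ℝ) := by rw [key_nat K q p, e]
            calc ∑ l ∈ range (K+1),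
                  ((-1 : ℝ)^q * (l.choose q : ℝ) * y^q / (Nat.factorial q : ℝ))
                  * ((-1 : ℝ)^(p+1) * ((K-l).choose p : ℝ) * x^(p+1) / (Nat.factorial (p+1) : ℝ))
                = ∑ l ∈ range (K+1), ((l.choose q * ((K-l).choose p) : ℕ) : ℝ)
                    * ((-1 : ℝ)^(p+1+q) * x^(p+1) * y^q
                      / ((Nat.factorial (p+1) : ℝ) * (Nat.factorial q : ℝ))) :=
                  Finset.sum_congr rfl (fun l _ => by push_cast; ring)
              _ = ((∑ l ∈ range (K+1), l.choose q * ((K-l).choose p) : ℕ) : ℝ)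
                    * ((-1 : ℝ)^(p+1+q) * x^(p+1) * y^q
                      / ((Nat.factorial (p+1) : ℝ) * (Nat.factorial q : ℝ))) := by
                  rw [← Finset.sum_mul, Nat.cast_sum]
              _ = (-1 : ℝ)^((p+1)+q) * ((K+1).choose ((p+1)+q) : ℝ) * x^(p+1) * y^q
                    / ((Nat.factorial (p+1) : ℝ) * (Nat.factorial q : ℝ)) := by
                  rw [hk]; push_cast [show (p+1)+q = p+1+q from rfl]; ring
        _ = ∑ p ∈ range (K+1), ∑ q ∈ range (K+2),
              (-1 : ℝ)^((p+1)+q) * ((K+1).choose ((p+1)+q) : ℝ) * x^(p+1) * y^q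
                / ((Nat.factorial (p+1) : ℝ) * (Nat.factorial q : ℝ)) := Finset.sum_comm
    · -- p = 0 column
      rw [laguerreL_zero, mul_one, laguerreL_pad (K+1) (K+1) le_rfl y]
      apply Finset.sum_congr rfl
      intro q _
      rw [Nat.zero_add]
      norm_num [Nat.factorial_zero]
lemma laguerreL_continuous (k : ℕ) : Continuous (laguerreL k) := by
  unfold laguerreL
  exact continuous_finset_sum _ (fun j _ => by fun_prop)

lemma lagFun_continuous (a : ℝ) (k : ℕ) : Continuous (lagFun a k) := by
  unfold lagFun
  have := laguerreL_continuous k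
  fun_prop

lemma lagFun_add (a : ℝ) (ha : 0 < a) (k : ℕ) (s τ : ℝ) :
    lagFun a k (s + τ) = (Real.sqrt (2*a))⁻¹ *
      ((∑ l ∈ range k, lagFun a l τ * (lagFun a (k-l) s - lagFun a (k-l-1) s))
        + lagFun a k τ * lagFun a 0 s) := by
  have h2a : (0:ℝ) < 2*a := by linarith
  have hs : Real.sqrt (2*a) ^ 2 = 2*a := Real.sq_sqrt h2a.le
  have hsne : Real.sqrt (2*a) ≠ 0 := by positivity
  unfold lagFun
  have hx : 2*a*(s+τ) = 2*a*s + 2*a*τ := by ring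
  rw [hx, laguerre_add k (2*a*s) (2*a*τ)]
  have hsum : ∑ l ∈ range k,
      (Real.sqrt (2*a) * Real.exp (-(a*τ)) * laguerreL l (2*a*τ)) *
        (Real.sqrt (2*a) * Real.exp (-(a*s)) * laguerreL (k-l) (2*a*s)
          - Real.sqrt (2*a) * Real.exp (-(a*s)) * laguerreL (k-l-1) (2*a*s))
      = (2*a) * (Real.exp (-(a*τ)) * Real.exp (-(a*s))) *
          ∑ l ∈ range k, laguerreL l (2*a*τ) *
            (laguerreL (k-l) (2*a*s) - laguerreL (k-l-1) (2*a*s)) := by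
    rw [Finset.mul_sum]
    apply Finset.sum_congr rfl
    intro l _
    linear_combination (Real.exp (-(a*τ)) * Real.exp (-(a*s)) * laguerreL l (2*a*τ) *
      (laguerreL (k-l) (2*a*s) - laguerreL (k-l-1) (2*a*s))) * hs
  rw [hsum]
  rw [show -(a*(s+τ)) = -(a*s) + -(a*τ) by ring, Real.exp_add]
  rw [eq_inv_mul_iff_mul_eq₀ hsne]
  linear_combination (Real.exp (-(a*s)) * Real.exp (-(a*τ)) *
    (∑ l ∈ range k, laguerreL l (2*a*τ) *
      (laguerreL (k-l) (2*a*s) - laguerreL (k-l-1) (2*a*s)))) * hs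

lemma lagFun_bound (a : ℝ) (ha : 0 < a) (k : ℕ) :
    ∀ t : ℝ, ‖(Set.Ioi (0:ℝ)).indicator (lagFun a k) t‖ ≤ Real.sqrt (2*a) * 3^k := by
  intro t
  have hpos : (0:ℝ) ≤ Real.sqrt (2*a) * 3^k := by positivity
  by_cases ht : t ∈ Set.Ioi (0:ℝ)
  · rw [Set.indicator_of_mem ht]
    simp only [Set.mem_Ioi] at ht
    have hat : (0:ℝ) ≤ a * t := by positivity
    rw [Real.norm_eq_abs]
    unfold lagFun
    rw [abs_mul, abs_mul, abs_of_nonneg (Real.sqrt_nonneg _), abs_of_nonneg (Real.exp_pos _).le,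
      mul_assoc]
    apply mul_le_mul_of_nonneg_left ?_ (Real.sqrt_nonneg _)
    have hL : |laguerreL k (2*a*t)| ≤ ∑ j ∈ range (k+1), (k.choose j : ℝ) * (2*a*t)^j / (Nat.factorial j : ℝ) := by
      refine (Finset.abs_sum_le_sum_abs _ _).trans ?_
      apply Finset.sum_le_sum
      intro j _
      rw [abs_div, abs_mul, abs_mul, abs_pow, abs_neg, abs_one, one_pow, one_mul,
        Nat.abs_cast, abs_of_nonneg (by positivity : (0:ℝ) ≤ (2*a*t)^j),
        abs_of_nonneg (by positivity : (0:ℝ) ≤ (Nat.factorial j : ℝ))]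
    calc Real.exp (-(a*t)) * |laguerreL k (2*a*t)|
        ≤ Real.exp (-(a*t)) * ∑ j ∈ range (k+1), (k.choose j : ℝ) * (2*a*t)^j / (Nat.factorial j : ℝ) :=
          mul_le_mul_of_nonneg_left hL (Real.exp_pos _).le
      _ = ∑ j ∈ range (k+1), (k.choose j : ℝ) * ((a*t)^j / (Nat.factorial j : ℝ) * Real.exp (-(a*t))) * 2^j := by
          rw [Finset.mul_sum]
          apply Finset.sum_congr rfl
          intro j _
          rw [show 2*a*t = 2*(a*t) by ring, mul_pow]
          ring
      _ ≤ ∑ j ∈ range (k+1), (k.choose j : ℝ) * 1 * 2^j := by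
          apply Finset.sum_le_sum
          intro j _
          have h1 : (a*t)^j / (Nat.factorial j : ℝ) ≤ Real.exp (a*t) :=
            Real.pow_div_factorial_le_exp (a*t) hat j
          have h2 : (a*t)^j / (Nat.factorial j : ℝ) * Real.exp (-(a*t)) ≤ 1 := by
            rw [Real.exp_neg]
            rw [← Real.exp_neg] at *
            calc (a*t)^j / (Nat.factorial j : ℝ) * Real.exp (-(a*t))
                ≤ Real.exp (a*t) * Real.exp (-(a*t)) :=
                  mul_le_mul_of_nonneg_right h1 (Real.exp_pos _).le
              _ = 1 := by rw [← Real.exp_add]; simp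
          have h3 : (0:ℝ) ≤ (a*t)^j / (Nat.factorial j : ℝ) * Real.exp (-(a*t)) := by positivity
          apply mul_le_mul_of_nonneg_right ?_ (by positivity : (0:ℝ) ≤ (2:ℝ)^j)
          exact mul_le_mul_of_nonneg_left h2 (Nat.cast_nonneg _)
      _ = 3^k := by
          have h := add_pow (2:ℝ) 1 k
          norm_num at h
          rw [h]
          apply Finset.sum_congr rfl
          intro j _
          ring
  · rw [Set.indicator_of_notMem ht]
    simpa using hpos

lemma coeff_indicator (a : ℝ) (h : ℝ → ℝ) (j : ℕ) :
    lagCoeff a h j = ∫ t, (Set.Ioi (0:ℝ)).indicator h t * (Set.Ioi (0:ℝ)).indicator (lagFun a j) t := by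
  rw [lagCoeff, ← integral_indicator measurableSet_Ioi]
  congr 1
  funext t
  by_cases ht : t ∈ Set.Ioi (0:ℝ)
  · simp [Set.indicator_of_mem ht]
  · simp [Set.indicator_of_notMem ht]

theorem coeff_conv (a : ℝ) (ha : 0 < a) (f g : ℝ → ℝ)
    (hf1 : IntegrableOn f (Set.Ioi 0)) (hg1 : IntegrableOn g (Set.Ioi 0)) (k : ℕ) :
    lagCoeff a (conv g f) k =
      (Real.sqrt (2 * a))⁻¹ * (lagCoeff a g 0 * lagCoeff a f k +
        ∑ l ∈ Finset.range k,
          (lagCoeff a g (k - l) - lagCoeff a g (k - l - 1)) * lagCoeff a f l) := by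
  set f₀ := (Set.Ioi (0:ℝ)).indicator f with hf₀def
  set g₀ := (Set.Ioi (0:ℝ)).indicator g with hg₀def
  set ψ := fun (j : ℕ) => (Set.Ioi (0:ℝ)).indicator (lagFun a j) with hψdef
  have hf₀ : Integrable f₀ volume := (integrable_indicator_iff measurableSet_Ioi).mpr hf1
  have hg₀ : Integrable g₀ volume := (integrable_indicator_iff measurableSet_Ioi).mpr hg1
  have hψm : ∀ j, AEStronglyMeasurable (ψ j) volume := fun j =>
    (((lagFun_continuous a j).measurable).indicator measurableSet_Ioi).aestronglyMeasurable
  have hψb : ∀ j, ∃ C, ∀ t, ‖ψ j t‖ ≤ C := fun j => ⟨_, lagFun_bound a ha j⟩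
  have hgψ : ∀ j, Integrable (fun t => g₀ t * ψ j t) volume := fun j =>
    (hg₀.bdd_mul (hψm j) (Filter.Eventually.of_forall (hψb j).choose_spec)).congr (Filter.Eventually.of_forall fun t => mul_comm _ _)
  have hfψ : ∀ j, Integrable (fun t => f₀ t * ψ j t) volume := fun j =>
    (hf₀.bdd_mul (hψm j) (Filter.Eventually.of_forall (hψb j).choose_spec)).congr (Filter.Eventually.of_forall fun t => mul_comm _ _)
  have hcg : ∀ j, lagCoeff a g j = ∫ t, g₀ t * ψ j t := fun j => coeff_indicator a g j
  have hcf : ∀ j, lagCoeff a f j = ∫ t, f₀ t * ψ j t := fun j => coeff_indicator a f j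
  have step0 : lagCoeff a (conv g f) k = ∫ t, (∫ τ, g₀ (t - τ) * f₀ τ) * ψ k t := by
    rw [lagCoeff, ← integral_indicator measurableSet_Ioi]
    congr 1
    funext t
    by_cases ht : t ∈ Set.Ioi (0:ℝ)
    · rw [Set.indicator_of_mem ht]
      have hψkt : ψ k t = lagFun a k t := Set.indicator_of_mem ht _
      have hconv : conv g f t = ∫ τ, g₀ (t - τ) * f₀ τ := by
        have ht' : (0:ℝ) < t := ht
        rw [conv, intervalIntegral.integral_of_le ht'.le, integral_Ioc_eq_integral_Ioo,
          ← integral_indicator measurableSet_Ioo]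
        congr 1
        funext τ
        by_cases h1 : τ ∈ Set.Ioo (0:ℝ) t
        · rw [Set.indicator_of_mem h1]
          obtain ⟨h2, h3⟩ := h1
          rw [hg₀def, hf₀def,
            Set.indicator_of_mem (Set.mem_Ioi.mpr (by linarith : (0:ℝ) < t - τ)),
            Set.indicator_of_mem (Set.mem_Ioi.mpr h2)]
        · rw [Set.indicator_of_notMem h1]
          simp only [Set.mem_Ioo, not_and, not_lt] at h1
          by_cases h2 : (0:ℝ) < τ
          · have h3 : t - τ ∉ Set.Ioi (0:ℝ) := by
              simp only [Set.mem_Ioi, not_lt]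
              linarith [h1 h2]
            rw [hg₀def, Set.indicator_of_notMem h3]
            ring
          · rw [hf₀def, Set.indicator_of_notMem (by simpa using h2 : τ ∉ Set.Ioi (0:ℝ))]
            ring
      rw [hconv, hψkt]
    · rw [Set.indicator_of_notMem ht]
      have : ψ k t = 0 := Set.indicator_of_notMem ht _
      rw [this, mul_zero]
  have hH : Integrable (fun p : ℝ × ℝ => g₀ (p.1 - p.2) * f₀ p.2 * ψ k p.1)
      (volume.prod volume) := by
    have base : Integrable (fun p : ℝ × ℝ => f₀ p.2 * g₀ (p.1 - p.2)) (volume.prod volume) := by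
      have := hf₀.convolution_integrand (ContinuousLinearMap.mul ℝ ℝ) hg₀
      simpa using this
    have hm : AEStronglyMeasurable (fun p : ℝ × ℝ => ψ k p.1) (volume.prod volume) :=
      ((((lagFun_continuous a k).measurable).indicator measurableSet_Ioi).comp
        measurable_fst).aestronglyMeasurable
    have hb : ∃ C, ∀ p : ℝ × ℝ, ‖ψ k p.1‖ ≤ C := ⟨_, fun p => lagFun_bound a ha k p.1⟩
    exact (base.bdd_mul hm (Filter.Eventually.of_forall hb.choose_spec)).congr (Filter.Eventually.of_forall fun p => by ring)
  have step1 : (∫ t, (∫ τ, g₀ (t - τ) * f₀ τ) * ψ k t)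
      = ∫ t, ∫ τ, g₀ (t - τ) * f₀ τ * ψ k t := by
    congr 1
    funext t
    exact (integral_mul_const _ _).symm
  have step2 : (∫ t, ∫ τ, g₀ (t - τ) * f₀ τ * ψ k t)
      = ∫ τ, ∫ t, g₀ (t - τ) * f₀ τ * ψ k t := integral_integral_swap hH
  have step3 : ∀ τ : ℝ, (∫ t, g₀ (t - τ) * f₀ τ * ψ k t)
      = f₀ τ * ∫ s, g₀ s * ψ k (s + τ) := by
    intro τ
    have h1 : (∫ t, g₀ (t - τ) * f₀ τ * ψ k t) = ∫ t, f₀ τ * (g₀ (t - τ) * ψ k t) := by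
      congr 1; funext t; ring
    rw [h1, integral_const_mul]
    congr 1
    rw [← MeasureTheory.integral_add_right_eq_self (fun t => g₀ (t - τ) * ψ k t) τ]
    congr 1
    funext s
    simp only [add_sub_cancel_right]
  have hRpt : ∀ τ ∈ Set.Ioi (0:ℝ), (∫ s, g₀ s * ψ k (s + τ))
      = (Real.sqrt (2*a))⁻¹ *
        ((∑ l ∈ range k, (lagCoeff a g (k-l) - lagCoeff a g (k-l-1)) * ψ l τ)
          + lagCoeff a g 0 * ψ k τ) := by
    intro τ hτ
    have hτ' : (0:ℝ) < τ := hτ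
    have hψτ : ∀ j, ψ j τ = lagFun a j τ := fun j => Set.indicator_of_mem hτ _
    have hpt : ∀ s, g₀ s * ψ k (s + τ) = (Real.sqrt (2*a))⁻¹ *
        ((∑ l ∈ range k, lagFun a l τ * (g₀ s * ψ (k-l) s - g₀ s * ψ (k-l-1) s))
          + lagFun a k τ * (g₀ s * ψ 0 s)) := by
      intro s
      by_cases hs : s ∈ Set.Ioi (0:ℝ)
      · have hs' : (0:ℝ) < s := hs
        have h1 : ψ k (s + τ) = lagFun a k (s + τ) :=
          Set.indicator_of_mem (Set.mem_Ioi.mpr (by linarith)) _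
        have h2 : ∀ j, ψ j s = lagFun a j s := fun j => Set.indicator_of_mem hs _
        simp only [h1, h2]
        rw [lagFun_add a ha k s τ]
        have h3 : ∑ l ∈ range k, lagFun a l τ *
            (g₀ s * lagFun a (k-l) s - g₀ s * lagFun a (k-l-1) s)
            = g₀ s * ∑ l ∈ range k, lagFun a l τ * (lagFun a (k-l) s - lagFun a (k-l-1) s) := by
          rw [Finset.mul_sum]
          apply Finset.sum_congr rfl
          intro l _
          ring
        rw [h3]
        ring
      · have h1 : g₀ s = 0 := Set.indicator_of_notMem hs _
        simp [h1]
    rw [show (fun s => g₀ s * ψ k (s + τ)) = fun s => (Real.sqrt (2*a))⁻¹ *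
        ((∑ l ∈ range k, lagFun a l τ * (g₀ s * ψ (k-l) s - g₀ s * ψ (k-l-1) s))
          + lagFun a k τ * (g₀ s * ψ 0 s)) from funext hpt]
    rw [integral_const_mul]
    have hint1 : Integrable (fun s => ∑ l ∈ range k,
        lagFun a l τ * (g₀ s * ψ (k-l) s - g₀ s * ψ (k-l-1) s)) volume := by
      apply integrable_finset_sum
      intro l _
      exact ((hgψ (k-l)).sub (hgψ (k-l-1))).const_mul _
    have hint2 : Integrable (fun s => lagFun a k τ * (g₀ s * ψ 0 s)) volume :=
      (hgψ 0).const_mul _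
    have hint3 : ∀ l ∈ range k, Integrable (fun s =>
        lagFun a l τ * (g₀ s * ψ (k-l) s - g₀ s * ψ (k-l-1) s)) volume := by
      intro l _
      exact ((hgψ (k-l)).sub (hgψ (k-l-1))).const_mul _
    rw [integral_add hint1 hint2, integral_finset_sum _ hint3]
    congr 1
    congr 1
    · apply Finset.sum_congr rfl
      intro l _
      rw [integral_const_mul]
      have hsub : (∫ s, (g₀ s * ψ (k-l) s - g₀ s * ψ (k-l-1) s))
          = (∫ s, g₀ s * ψ (k-l) s) - ∫ s, g₀ s * ψ (k-l-1) s :=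
        integral_sub (hgψ (k-l)) (hgψ (k-l-1))
      rw [hsub, hψτ l, ← hcg (k-l), ← hcg (k-l-1)]
      ring
    · rw [integral_const_mul, hψτ k, ← hcg 0]
      ring
  have step4 : (∫ τ, ∫ t, g₀ (t - τ) * f₀ τ * ψ k t)
      = ∫ τ, (Real.sqrt (2*a))⁻¹ *
          ((∑ l ∈ range k, (lagCoeff a g (k-l) - lagCoeff a g (k-l-1)) * (f₀ τ * ψ l τ))
            + lagCoeff a g 0 * (f₀ τ * ψ k τ)) := by
    congr 1
    funext τ
    rw [step3 τ]
    by_cases hτ : τ ∈ Set.Ioi (0:ℝ)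
    · rw [hRpt τ hτ]
      have h3 : ∑ l ∈ range k, (lagCoeff a g (k-l) - lagCoeff a g (k-l-1)) * (f₀ τ * ψ l τ)
          = f₀ τ * ∑ l ∈ range k, (lagCoeff a g (k-l) - lagCoeff a g (k-l-1)) * ψ l τ := by
        rw [Finset.mul_sum]
        apply Finset.sum_congr rfl
        intro l _
        ring
      rw [h3]
      ring
    · have h1 : f₀ τ = 0 := Set.indicator_of_notMem hτ _
      simp [h1]
  rw [step0, step1, step2, step4]
  rw [integral_const_mul]
  have hint1 : Integrable (fun τ => ∑ l ∈ range k,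
      (lagCoeff a g (k-l) - lagCoeff a g (k-l-1)) * (f₀ τ * ψ l τ)) volume := by
    apply integrable_finset_sum
    intro l _
    exact (hfψ l).const_mul _
  have hint2 : Integrable (fun τ => lagCoeff a g 0 * (f₀ τ * ψ k τ)) volume :=
    (hfψ k).const_mul _
  have hint3 : ∀ l ∈ range k, Integrable (fun τ =>
      (lagCoeff a g (k-l) - lagCoeff a g (k-l-1)) * (f₀ τ * ψ l τ)) volume := by
    intro l _
    exact (hfψ l).const_mul _
  rw [integral_add hint1 hint2, integral_finset_sum _ hint3]
  have e1 : ∀ l ∈ range k,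
      (∫ τ, (lagCoeff a g (k-l) - lagCoeff a g (k-l-1)) * (f₀ τ * ψ l τ))
        = (lagCoeff a g (k-l) - lagCoeff a g (k-l-1)) * lagCoeff a f l := by
    intro l _
    rw [integral_const_mul, ← hcf l]
  rw [Finset.sum_congr rfl e1, integral_const_mul, ← hcf k]
  ring

end LapDeconv

open LapDeconv in
/-- Laguerre coefficients of a Laplace convolution: triangular Toeplitz system. -/
theorem laplace_convolution_laguerre_coeffs
    (a : ℝ) (ha : 0 < a) (f g : ℝ → ℝ)
    (hf1 : MeasureTheory.IntegrableOn f (Set.Ioi 0))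
    (hf2 : MeasureTheory.MemLp f 2 (MeasureTheory.volume.restrict (Set.Ioi 0)))
    (hg1 : MeasureTheory.IntegrableOn g (Set.Ioi 0))
    (hg2 : MeasureTheory.MemLp g 2 (MeasureTheory.volume.restrict (Set.Ioi 0))) :
    (∀ k : ℕ, lagCoeff a (conv g f) k =
      (Real.sqrt (2 * a))⁻¹ * (lagCoeff a g 0 * lagCoeff a f k +
        ∑ l ∈ Finset.range k,
          (lagCoeff a g (k - l) - lagCoeff a g (k - l - 1)) * lagCoeff a f l)) ∧
    (∀ m : ℕ, 1 ≤ m →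
      (fun i : Fin m => lagCoeff a (conv g f) (i : ℕ)) =
        (Gmat a g m).mulVec (fun i : Fin m => lagCoeff a f (i : ℕ))) := by
  
  constructor
  · exact fun k => coeff_conv a ha f g hf1 hg1 k
  · intro m hm
    funext i
    have hi : (i : ℕ) < m := i.isLt
    rw [coeff_conv a ha f g hf1 hg1 (i : ℕ)]
    show _ = ∑ j : Fin m, Gmat a g m i j * lagCoeff a f (j : ℕ)
    have hG : ∀ j : Fin m, Gmat a g m i j
        = (if (j:ℕ) ≤ (i:ℕ) then toepCol a g ((i:ℕ)-(j:ℕ)) else 0) := fun j => rfl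
    simp only [hG]
    rw [Finset.sum_congr rfl (fun j (_ : j ∈ Finset.univ) => rfl),
      Fin.sum_univ_eq_sum_range (fun j =>
        (if j ≤ (i:ℕ) then toepCol a g ((i:ℕ)-j) else 0) * lagCoeff a f j) m]
    have h1 : ∑ j ∈ Finset.range m,
        (if j ≤ (i:ℕ) then toepCol a g ((i:ℕ)-j) else 0) * lagCoeff a f j
        = ∑ j ∈ Finset.range ((i:ℕ)+1),
        (if j ≤ (i:ℕ) then toepCol a g ((i:ℕ)-j) else 0) * lagCoeff a f j := by
      symm
      apply Finset.sum_subset (Finset.range_subset_range.mpr (by omega))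
      intro j hj hj'
      simp only [Finset.mem_range] at hj hj'
      rw [if_neg (by omega)]
      ring
    rw [h1, Finset.sum_range_succ, if_pos le_rfl]
    have h2 : toepCol a g ((i:ℕ)-(i:ℕ)) = lagCoeff a g 0 / Real.sqrt (2*a) := by
      rw [Nat.sub_self, toepCol, if_pos rfl]
    have h3 : ∀ j ∈ Finset.range (i:ℕ),
        (if j ≤ (i:ℕ) then toepCol a g ((i:ℕ)-j) else 0) * lagCoeff a f j
        = ((lagCoeff a g ((i:ℕ)-j) - lagCoeff a g ((i:ℕ)-j-1)) / Real.sqrt (2*a))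
            * lagCoeff a f j := by
      intro j hj
      simp only [Finset.mem_range] at hj
      rw [if_pos (by omega), toepCol, if_neg (by omega)]
    rw [Finset.sum_congr rfl h3, h2]
    rw [mul_add, Finset.mul_sum, add_comm]
    congr 1
    · apply Finset.sum_congr rfl
      intro l _
      ring
    · ring
end
end

section
/- For every a > 0, every t ≥ 0 and all integers k, j ≥ 0, the Laguerre functions satisfy the convolution identity ∫_0^t φ_k(x) φ_j(t−x) dx = (2a)^{−1/2} [ φ_{k+j}(t) − φ_{k+j+1}(t) ]. -/
open MeasureTheory Matrix Finset Filter Topology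

noncomputable section

namespace LagConvAux

lemma beta_nat (q : ℕ) : ∀ (p : ℕ) (t : ℝ),
    ∫ x in (0:ℝ)..t, x ^ p * (t - x) ^ q
      = (p.factorial * q.factorial : ℝ) / ((p + q + 1).factorial : ℝ) * t ^ (p + q + 1) := by
  induction q with
  | zero =>
    intro p t
    have f2 : (p : ℝ) + 1 ≠ 0 := by positivity
    simp only [pow_zero, mul_one, integral_pow, Nat.add_zero, Nat.factorial_zero,
      Nat.factorial_succ]
    push_cast
    field_simp
    ring
  | succ q ih =>
    intro p t
    have hu : ∀ x ∈ Set.uIcc (0:ℝ) t,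
        HasDerivAt (fun x : ℝ => (t - x) ^ (q + 1)) (-((q:ℝ)+1) * (t - x) ^ q) x := by
      intro x _
      have h1 : HasDerivAt (fun x : ℝ => t - x) (-1) x := by
        simpa using (hasDerivAt_id x).const_sub t
      have h2 := h1.pow (q+1)
      refine h2.congr_deriv ?_
      push_cast; ring
    have hv : ∀ x ∈ Set.uIcc (0:ℝ) t,
        HasDerivAt (fun x : ℝ => x ^ (p+1) / ((p:ℝ)+1)) (x ^ p) x := by
      intro x _
      have f2 : (p : ℝ) + 1 ≠ 0 := by positivity
      have h2 := (hasDerivAt_pow (p+1) x).div_const ((p:ℝ)+1)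
      refine h2.congr_deriv ?_
      push_cast
      field_simp
    have hu' : IntervalIntegrable (fun x : ℝ => -((q:ℝ)+1) * (t - x) ^ q) volume 0 t :=
      (continuous_const.mul ((continuous_const.sub continuous_id).pow q)).intervalIntegrable _ _
    have hv' : IntervalIntegrable (fun x : ℝ => x ^ p) volume 0 t :=
      (continuous_pow p).intervalIntegrable _ _
    have key := intervalIntegral.integral_mul_deriv_eq_deriv_mul hu hv hu' hv'
    have hcomm : ∫ x in (0:ℝ)..t, x ^ p * (t - x) ^ (q+1)
        = ∫ x in (0:ℝ)..t, (t - x) ^ (q+1) * x ^ p := by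
      apply intervalIntegral.integral_congr; intro x _; ring
    have hrw : ∫ x in (0:ℝ)..t, (-((q:ℝ)+1) * (t - x) ^ q) * (x ^ (p+1) / ((p:ℝ)+1))
        = (-((q:ℝ)+1) / ((p:ℝ)+1)) * ∫ x in (0:ℝ)..t, x ^ (p+1) * (t - x) ^ q := by
      rw [← intervalIntegral.integral_const_mul]
      apply intervalIntegral.integral_congr; intro x _; ring
    rw [hcomm, key, hrw, ih (p+1) t]
    have e1 : p + 1 + q + 1 = p + (q + 1) + 1 := by omega
    rw [e1]
    have f1 : ((p + (q+1) + 1).factorial : ℝ) ≠ 0 := Nat.cast_ne_zero.2 (Nat.factorial_ne_zero _)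
    have f2 : (p : ℝ) + 1 ≠ 0 := by positivity
    simp only [sub_self, zero_pow (Nat.succ_ne_zero q), zero_pow (Nat.succ_ne_zero p),
      Nat.factorial_succ (q), Nat.factorial_succ p, zero_mul, mul_zero, zero_div, zero_sub,
      sub_zero, neg_mul, neg_neg, zero_mul]
    push_cast
    field_simp

lemma conv_poly (k j : ℕ) (b t : ℝ) :
    b * ∫ x in (0:ℝ)..t, LapDeconv.laguerreL k (b * x) * LapDeconv.laguerreL j (b * (t - x))
      = LapDeconv.laguerreL (k + j) (b * t) - LapDeconv.laguerreL (k + j + 1) (b * t) := by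
  set H : ℕ → ℕ → ℝ := fun p q =>
    (-1:ℝ)^(p+q) * (k.choose p : ℝ) * (j.choose q : ℝ) * (b*t)^(p+q+1)
      / ((p+q+1).factorial : ℝ) with hH
  have hto : ∀ p q, k < p ∨ j < q → H p q = 0 := by
    intro p q hpq
    simp only [hH]
    rcases hpq with h | h <;> rw [Nat.choose_eq_zero_of_lt h] <;> simp
  -- Step 1 : the LHS
  have h1 : ∀ x : ℝ, LapDeconv.laguerreL k (b*x) * LapDeconv.laguerreL j (b*(t-x))
      = ∑ p ∈ range (k+1), ∑ q ∈ range (j+1),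
          ((-1:ℝ)^p * (k.choose p : ℝ) * b^p / (p.factorial : ℝ)
            * ((-1:ℝ)^q * (j.choose q : ℝ) * b^q / (q.factorial : ℝ)))
          * (x ^ p * (t - x) ^ q) := by
    intro x
    rw [LapDeconv.laguerreL, LapDeconv.laguerreL, Finset.sum_mul_sum]
    refine Finset.sum_congr rfl fun p _ => Finset.sum_congr rfl fun q _ => ?_
    rw [mul_pow, mul_pow]
    ring
  have hL : b * ∫ x in (0:ℝ)..t,
      LapDeconv.laguerreL k (b*x) * LapDeconv.laguerreL j (b*(t-x))
      = ∑ p ∈ range (k+1), ∑ q ∈ range (j+1), H p q := by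
    rw [intervalIntegral.integral_congr (fun x _ => h1 x)]
    rw [intervalIntegral.integral_finset_sum (fun p _ =>
      Continuous.intervalIntegrable (by fun_prop) _ _)]
    have : ∀ p ∈ range (k+1), (∫ x in (0:ℝ)..t, ∑ q ∈ range (j+1),
        ((-1:ℝ)^p * (k.choose p : ℝ) * b^p / (p.factorial : ℝ)
            * ((-1:ℝ)^q * (j.choose q : ℝ) * b^q / (q.factorial : ℝ)))
          * (x ^ p * (t - x) ^ q)) = ∑ q ∈ range (j+1),
          ((-1:ℝ)^p * (k.choose p : ℝ) * b^p / (p.factorial : ℝ)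
            * ((-1:ℝ)^q * (j.choose q : ℝ) * b^q / (q.factorial : ℝ)))
          * ((p.factorial * q.factorial : ℝ) / ((p + q + 1).factorial : ℝ) * t ^ (p + q + 1)) := by
      intro p _
      rw [intervalIntegral.integral_finset_sum (fun q _ =>
        Continuous.intervalIntegrable (by fun_prop) _ _)]
      exact Finset.sum_congr rfl fun q _ => by
        rw [intervalIntegral.integral_const_mul, beta_nat]
    rw [Finset.sum_congr rfl this, Finset.mul_sum]
    refine Finset.sum_congr rfl fun p _ => ?_
    rw [Finset.mul_sum]
    refine Finset.sum_congr rfl fun q _ => ?_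
    have f1 : (p.factorial : ℝ) ≠ 0 := Nat.cast_ne_zero.2 (Nat.factorial_ne_zero _)
    have f2 : (q.factorial : ℝ) ≠ 0 := Nat.cast_ne_zero.2 (Nat.factorial_ne_zero _)
    have f3 : ((p+q+1).factorial : ℝ) ≠ 0 := Nat.cast_ne_zero.2 (Nat.factorial_ne_zero _)
    simp only [hH]
    rw [mul_pow]
    field_simp
    ring
  -- Step 2 : the RHS
  have hR : LapDeconv.laguerreL (k+j) (b*t) - LapDeconv.laguerreL (k+j+1) (b*t)
      = ∑ n ∈ range (k+j+1), ∑ p ∈ range (n+1), H p (n-p) := by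
    have e1 : LapDeconv.laguerreL (k+j) (b*t)
        = ∑ i ∈ range (k+j+1+1), (-1:ℝ)^i * ((k+j).choose i : ℝ) * (b*t)^i
            / (i.factorial : ℝ) := by
      rw [LapDeconv.laguerreL, Finset.sum_range_succ (n := k+j+1)]
      simp [Nat.choose_succ_self]
    rw [e1, LapDeconv.laguerreL, ← Finset.sum_sub_distrib, Finset.sum_range_succ']
    simp only [pow_zero, Nat.choose_zero_right, Nat.cast_one, Nat.factorial_zero, one_mul,
      mul_one, sub_self, add_zero]
    refine Finset.sum_congr rfl fun n hn => ?_
    have hterm : ∀ p ∈ range (n+1), H p (n-p)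
        = ((k.choose p * j.choose (n-p) : ℕ) : ℝ)
            * ((-1:ℝ)^n * (b*t)^(n+1) / ((n+1).factorial : ℝ)) := by
      intro p hp
      have hpn : p ≤ n := Nat.lt_succ_iff.mp (Finset.mem_range.mp hp)
      simp only [hH]
      rw [Nat.add_sub_cancel' hpn]
      push_cast
      ring
    rw [Finset.sum_congr rfl hterm, ← Finset.sum_mul, ← Nat.cast_sum,
      ← Finset.Nat.sum_antidiagonal_eq_sum_range_succ (fun p q => k.choose p * j.choose q) n,
      ← Nat.add_choose_eq]
    rw [Nat.choose_succ_succ' (k+j) n]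
    push_cast
    ring
  -- Step 3 : flip & extend
  rw [hL, hR, Finset.sum_range_diag_flip (k+j+1) (fun p q => H p q)]
  have inner : ∀ p ∈ range (k+j+1),
      ∑ q ∈ range (k+j+1-p), H p q = ∑ q ∈ range (j+1), H p q := by
    intro p _
    rcases le_or_gt p k with hp | hp
    · refine (Finset.sum_subset ?_ ?_).symm
      · rw [Finset.range_subset_range]; omega
      · intro q _ hq
        exact hto p q (Or.inr (by simp only [Finset.mem_range, not_lt] at hq; omega))
    · rw [Finset.sum_eq_zero fun q _ => hto p q (Or.inl hp),
        Finset.sum_eq_zero fun q _ => hto p q (Or.inl hp)]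
  rw [Finset.sum_congr rfl inner]
  refine Finset.sum_subset ?_ ?_
  · rw [Finset.range_subset_range]; omega
  · intro p _ hp
    exact Finset.sum_eq_zero fun q _ => hto p q (Or.inl (by
      simp only [Finset.mem_range, not_lt] at hp; omega))

end LagConvAux

open LapDeconv in
/-- Convolution identity for Laguerre functions:
`∫_0^t φ_k(x) φ_j(t-x) dx = (2a)^{-1/2} [φ_{k+j}(t) - φ_{k+j+1}(t)]`. -/
theorem laguerre_convolution_identity
    (a : ℝ) (ha : 0 < a) (t : ℝ) (ht : 0 ≤ t) (k j : ℕ) :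
    ∫ x in (0 : ℝ)..t, lagFun a k x * lagFun a j (t - x) =
      (Real.sqrt (2 * a))⁻¹ * (lagFun a (k + j) t - lagFun a (k + j + 1) t) := by
  have h2a : (0:ℝ) ≤ 2 * a := by linarith
  have hsq : Real.sqrt (2 * a) * Real.sqrt (2 * a) = 2 * a := Real.mul_self_sqrt h2a
  have hne : Real.sqrt (2 * a) ≠ 0 := ne_of_gt (Real.sqrt_pos.mpr (by linarith))
  have hinteg : ∀ x : ℝ, lagFun a k x * lagFun a j (t - x)
      = (2 * a * Real.exp (-(a * t)))
        * (laguerreL k (2 * a * x) * laguerreL j (2 * a * (t - x))) := by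
    intro x
    simp only [lagFun]
    have he : Real.exp (-(a * x)) * Real.exp (-(a * (t - x))) = Real.exp (-(a * t)) := by
      rw [← Real.exp_add]; congr 1; ring
    calc Real.sqrt (2*a) * Real.exp (-(a*x)) * laguerreL k (2*a*x) *
          (Real.sqrt (2*a) * Real.exp (-(a*(t-x))) * laguerreL j (2*a*(t-x)))
        = (Real.sqrt (2*a) * Real.sqrt (2*a)) *
            (Real.exp (-(a*x)) * Real.exp (-(a*(t-x)))) *
            (laguerreL k (2*a*x) * laguerreL j (2*a*(t-x))) := by ring
      _ = (2 * a * Real.exp (-(a*t)))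
            * (laguerreL k (2*a*x) * laguerreL j (2*a*(t-x))) := by rw [hsq, he]
  rw [intervalIntegral.integral_congr (fun x _ => hinteg x),
    intervalIntegral.integral_const_mul]
  have hkey := LagConvAux.conv_poly k j (2 * a) t
  simp only [lagFun]
  have : 2 * a * Real.exp (-(a*t)) *
      (∫ x in (0:ℝ)..t, laguerreL k (2*a*x) * laguerreL j (2*a*(t-x)))
      = Real.exp (-(a*t)) *
        (2 * a * ∫ x in (0:ℝ)..t, laguerreL k (2*a*x) * laguerreL j (2*a*(t-x))) := by ring
  rw [this, hkey]
  field_simp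
end
end

section
/- Let r ≥ 1 and let T_m(r) be the m×m lower triangular Toeplitz matrix with entries (T_m(r))_{i,j} = binom(r + (i−j) − 1, i−j) for i ≥ j and 0 otherwise (the finite Toeplitz matrix with symbol (1−z)^{−r} = ∑_{j≥0} binom(r+j−1, j) z^j). Then: (i) its squared Frobenius norm equals ∑_{j=0}^{m−1} binom(r+j−1, j)² (m−j) and satisfies ‖T_m(r)‖_F² ≤ m^{2r} for all m ≥ 1; (ii) there exists a constant c_r > 0 depending only on r such that the squared spectral norm satisfies ‖T_m(r)‖² ≥ c_r m^{2r} for all m ≥ 1. -/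
open MeasureTheory Matrix Finset Filter Topology

noncomputable section

open LapDeconv in
/-- The `m × m` lower triangular Toeplitz matrix with symbol `(1-z)^{-r}`. -/
noncomputable def toeplitzBinom (r m : ℕ) : Matrix (Fin m) (Fin m) ℝ :=
  Matrix.of fun i j => if (j : ℕ) ≤ (i : ℕ) then
    (Nat.choose (r + ((i : ℕ) - (j : ℕ)) - 1) ((i : ℕ) - (j : ℕ)) : ℝ) else 0

lemma aux_choose_le (s d : ℕ) : (d + s).choose s ≤ (d + 1) ^ s := by
  induction s with
  | zero => simp
  | succ s ih =>
    have h1 : (d + (s+1)).choose (s+1) * (s+1) = (d + s + 1) * (d + s).choose s := by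
      have := (Nat.add_one_mul_choose_eq (d+s) s).symm
      simpa [Nat.succ_eq_add_one, show d+(s+1)=d+s+1 from by ring] using this
    have h2 : (d + s + 1) * (d + s).choose s ≤ ((d+1) * (s+1)) * ((d+1)^s) := by
      apply Nat.mul_le_mul _ ih; nlinarith
    have := h1 ▸ h2
    have h3 : (d+1)*(s+1)*((d+1)^s) = (d+1)^(s+1) * (s+1) := by ring
    rw [h3] at this
    exact Nat.le_of_mul_le_mul_right this (Nat.succ_pos s)

lemma aux_pow_le_choose (r i : ℕ) : (i + 1) ^ r ≤ (i + r).choose r * r.factorial := by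
  induction r with
  | zero => simp
  | succ r ih =>
    have h1 : (i + (r+1)).choose (r+1) * (r+1) = (i + r + 1) * (i + r).choose r := by
      have := (Nat.add_one_mul_choose_eq (i+r) r).symm
      simpa [Nat.succ_eq_add_one, show i+(r+1)=i+r+1 from by ring] using this
    calc (i+1)^(r+1) = (i+1) * (i+1)^r := by ring
    _ ≤ (i + r + 1) * ((i+r).choose r * r.factorial) := by
        apply Nat.mul_le_mul (by omega) ih
    _ = ((i + (r+1)).choose (r+1) * (r+1)) * r.factorial := by rw [h1]; ring
    _ = (i + (r+1)).choose (r+1) * (r+1).factorial := by rw [Nat.factorial_succ]; ring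

lemma aux_hockey (s : ℕ) : ∀ i, ∑ d ∈ range (i+1), (s + d).choose d = (i + s + 1).choose i := by
  intro i
  induction i with
  | zero => simp
  | succ i ih =>
    rw [Finset.sum_range_succ, ih]
    have : (i + 1 + s + 1).choose (i+1) = (i + s + 1).choose i + (i + s + 1).choose (i+1) := by
      rw [show i + 1 + s + 1 = (i + s + 1) + 1 by ring, Nat.choose_succ_succ]
    rw [this]; congr 1; congr 1; omega

lemma aux_diag (f : ℕ → ℝ) : ∀ m, ∑ i ∈ range m, ∑ d ∈ range (i+1), f d
    = ∑ d ∈ range m, ((m - d : ℕ) : ℝ) * f d := by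
  intro m
  induction m with
  | zero => simp
  | succ m ih =>
    rw [Finset.sum_range_succ, ih, Finset.sum_range_succ (fun d => ((m + 1 - d : ℕ) : ℝ) * f d)]
    have h0 : ((m + 1 - m : ℕ) : ℝ) * f m = f m := by norm_num
    rw [h0]
    have h1 : ∑ d ∈ range m, ((m + 1 - d : ℕ) : ℝ) * f d
        = ∑ d ∈ range m, (((m - d : ℕ) : ℝ) * f d + f d) := by
      apply Finset.sum_congr rfl
      intro d hd
      rw [Finset.mem_range] at hd
      have : (m + 1 - d : ℕ) = (m - d) + 1 := by omega
      rw [this]; push_cast; ring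
    rw [h1, Finset.sum_add_distrib, Finset.sum_range_succ f m]
    ring

lemma aux_row (f : ℕ → ℝ) (m i : ℕ) (hi : i < m) :
    ∑ j ∈ range m, (if j ≤ i then f (i - j) else 0) = ∑ d ∈ range (i+1), f d := by
  rw [← Finset.sum_filter]
  have : (range m).filter (fun j => j ≤ i) = range (i+1) := by
    ext x; simp [Nat.lt_succ_iff]; omega
  rw [this, ← Finset.sum_range_reflect]
  apply Finset.sum_congr rfl
  intro j hj; rw [Finset.mem_range] at hj
  congr 1; omega

lemma aux_rayleigh {m : ℕ} (A : Matrix (Fin m) (Fin m) ℝ) (v : Fin m → ℝ) :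
    v ⬝ᵥ (Aᵀ * A).mulVec v = ∑ i, (A.mulVec v i) ^ 2 := by
  rw [← Matrix.mulVec_mulVec, Matrix.mulVec_transpose, dotProduct_comm,
    ← Matrix.dotProduct_mulVec]
  simp [dotProduct, sq]

lemma aux_bdd {N : ℕ} (B : Matrix (Fin N) (Fin N) ℝ) :
    BddAbove {r : ℝ | ∃ v : Fin N → ℝ, (∑ i, v i ^ 2) = 1 ∧ r = v ⬝ᵥ B.mulVec v} := by
  refine ⟨∑ i, ∑ j, |B i j|, ?_⟩
  rintro x ⟨v, hv, rfl⟩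
  have habs : ∀ i, |v i| ≤ 1 := by
    intro i
    have h1 : v i ^ 2 ≤ 1 := by
      calc v i ^ 2 ≤ ∑ k, v k ^ 2 :=
        Finset.single_le_sum (fun k _ => sq_nonneg (v k)) (Finset.mem_univ i)
      _ = 1 := hv
    nlinarith [abs_nonneg (v i), sq_abs (v i)]
  have : v ⬝ᵥ B.mulVec v = ∑ i, ∑ j, v i * (B i j * v j) := by
    simp [dotProduct, Matrix.mulVec, Finset.mul_sum]
  rw [this]
  apply Finset.sum_le_sum; intro i _
  apply Finset.sum_le_sum; intro j _
  calc v i * (B i j * v j) ≤ |v i * (B i j * v j)| := le_abs_self _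
  _ = |v i| * (|B i j| * |v j|) := by rw [abs_mul, abs_mul]
  _ ≤ |B i j| := by
      have := mul_le_mul (habs i)
        (mul_le_mul_of_nonneg_left (habs j) (abs_nonneg (B i j))) (by positivity) zero_le_one
      simpa using this


open LapDeconv in
/-- Frobenius-norm formula and bound, and spectral-norm lower bound, for the
triangular Toeplitz matrix with symbol `(1-z)^{-r}`. -/
theorem toeplitz_binom_norms (r : ℕ) (hr : 1 ≤ r) :
    (∀ m : ℕ, frobSq (toeplitzBinom r m) =
      ∑ j ∈ Finset.range m, (Nat.choose (r + j - 1) j : ℝ) ^ 2 * ((m - j : ℕ) : ℝ)) ∧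
    (∀ m : ℕ, 1 ≤ m → frobSq (toeplitzBinom r m) ≤ (m : ℝ) ^ (2 * r)) ∧
    (∃ c : ℝ, 0 < c ∧ ∀ m : ℕ, 1 ≤ m →
      c * (m : ℝ) ^ (2 * r) ≤ lambdaMax ((toeplitzBinom r m)ᵀ * toeplitzBinom r m)) := by
  obtain ⟨s, rfl⟩ : ∃ s, r = s + 1 := ⟨r - 1, by omega⟩
  set f : ℕ → ℝ := fun d => ((s + d).choose d : ℝ) ^ 2 with hf
  have hent : ∀ (m : ℕ) (i j : Fin m), toeplitzBinom (s+1) m i j =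
      if (j : ℕ) ≤ (i : ℕ) then (((s + ((i:ℕ) - (j:ℕ))).choose ((i:ℕ) - (j:ℕ))) : ℝ)
      else 0 := by
    intro m i j
    show (if (j:ℕ) ≤ (i:ℕ) then ((Nat.choose (s + 1 + ((i:ℕ) - (j:ℕ)) - 1) ((i:ℕ) - (j:ℕ))):ℝ)
      else 0) = _
    rw [show s + 1 + ((i:ℕ) - (j:ℕ)) - 1 = s + ((i:ℕ) - (j:ℕ)) from by omega]
  have key : ∀ m : ℕ, frobSq (toeplitzBinom (s+1) m)
      = ∑ d ∈ range m, ((m - d : ℕ) : ℝ) * f d := by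
    intro m
    have h1 : frobSq (toeplitzBinom (s+1) m)
        = ∑ i : Fin m, ∑ j : Fin m, (if (j:ℕ) ≤ (i:ℕ) then f ((i:ℕ) - (j:ℕ)) else 0) := by
      unfold frobSq
      simp only [Matrix.trace, Matrix.diag_apply, Matrix.mul_apply, Matrix.transpose_apply]
      rw [Finset.sum_comm]
      refine Finset.sum_congr rfl fun i _ => Finset.sum_congr rfl fun j _ => ?_
      rw [hent]
      split <;> simp [hf, sq]
    rw [h1]
    have h2 : ∀ i : Fin m, ∑ j : Fin m, (if (j:ℕ) ≤ (i:ℕ) then f ((i:ℕ) - (j:ℕ)) else 0)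
        = ∑ d ∈ range ((i:ℕ)+1), f d := by
      intro i
      rw [Fin.sum_univ_eq_sum_range (fun jn => if jn ≤ (i:ℕ) then f ((i:ℕ) - jn) else 0) m]
      exact aux_row f m i i.isLt
    rw [Finset.sum_congr rfl fun i _ => h2 i,
      Fin.sum_univ_eq_sum_range (fun i => ∑ d ∈ range (i+1), f d) m, aux_diag]
  refine ⟨?_, ?_, ?_⟩
  · intro m
    rw [key m]
    apply Finset.sum_congr rfl
    intro d _
    rw [show s + 1 + d - 1 = s + d from by omega]
    rw [hf]; ring
  · intro m hm
    rw [key m]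
    have hb : ∀ d ∈ range m, ((m - d : ℕ) : ℝ) * f d ≤ (m:ℝ) ^ (2*s+1) := by
      intro d hd
      rw [Finset.mem_range] at hd
      have hc : (s + d).choose d ≤ m ^ s := by
        calc (s + d).choose d = (d + s).choose s := by
              rw [Nat.add_comm, Nat.choose_symm_add]
        _ ≤ (d+1)^s := aux_choose_le s d
        _ ≤ m ^ s := Nat.pow_le_pow_left (by omega) s
      have hcr : ((s + d).choose d : ℝ) ≤ (m:ℝ)^s := by exact_mod_cast hc
      have hfd : f d ≤ ((m:ℝ)^s)^2 := by
        rw [hf]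
        exact pow_le_pow_left₀ (by positivity) hcr 2
      have hmd : ((m - d : ℕ) : ℝ) ≤ (m:ℝ) := by exact_mod_cast Nat.sub_le m d
      calc ((m - d : ℕ) : ℝ) * f d ≤ (m:ℝ) * ((m:ℝ)^s)^2 := by
            apply mul_le_mul hmd hfd (by positivity) (by positivity)
      _ = (m:ℝ)^(2*s+1) := by ring
    calc ∑ d ∈ range m, ((m - d : ℕ) : ℝ) * f d ≤ (range m).card • (m:ℝ)^(2*s+1) :=
        Finset.sum_le_card_nsmul _ _ _ hb
    _ = (m:ℝ) * (m:ℝ)^(2*s+1) := by rw [Finset.card_range]; simp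
    _ = (m:ℝ)^(2*(s+1)) := by ring
  · set F : ℝ := ((s+1).factorial : ℝ) with hF
    have hF0 : (0:ℝ) < F := by rw [hF]; exact_mod_cast (s+1).factorial_pos
    refine ⟨1 / (2^(2*s+3) * F^2), by positivity, ?_⟩
    intro m hm
    have hm0 : (0:ℝ) < (m:ℝ) := by exact_mod_cast hm
    set T := toeplitzBinom (s+1) m with hT
    set v : Fin m → ℝ := fun _ => (Real.sqrt m)⁻¹ with hv
    have hsm : Real.sqrt m ^ 2 = (m:ℝ) := Real.sq_sqrt hm0.le
    have hsm0 : Real.sqrt m ≠ 0 := by positivity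
    have hvsum : ∑ i, v i ^ 2 = 1 := by
      simp only [hv, Finset.sum_const, Finset.card_univ, Fintype.card_fin, nsmul_eq_mul]
      rw [inv_pow, hsm]
      field_simp
    have hmulvec : ∀ i : Fin m, T.mulVec v i
        = (Real.sqrt m)⁻¹ * ((((i:ℕ) + s + 1).choose (i:ℕ) : ℕ) : ℝ) := by
      intro i
      show ∑ j : Fin m, T i j * v j = _
      have : ∑ j : Fin m, T i j * v j = (∑ j : Fin m, T i j) * (Real.sqrt m)⁻¹ := by
        rw [Finset.sum_mul]
      rw [this]
      have hrow : ∑ j : Fin m, T i j = ∑ d ∈ range ((i:ℕ)+1), ((s + d).choose d : ℝ) := by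
        have e1 : ∀ j : Fin m, T i j
            = (fun jn => if jn ≤ (i:ℕ) then (((s + ((i:ℕ) - jn)).choose ((i:ℕ) - jn)) : ℝ)
              else 0) (j:ℕ) := fun j => hent m i j
        rw [Finset.sum_congr rfl fun j _ => e1 j,
          Fin.sum_univ_eq_sum_range
            (fun jn => if jn ≤ (i:ℕ) then (((s + ((i:ℕ) - jn)).choose ((i:ℕ) - jn)) : ℝ) else 0) m]
        exact aux_row (fun d => ((s + d).choose d : ℝ)) m i i.isLt
      rw [hrow, ← Nat.cast_sum, aux_hockey s (i:ℕ), mul_comm]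
    have hray : v ⬝ᵥ (Tᵀ * T).mulVec v
        = (1/(m:ℝ)) * ∑ i ∈ range m, ((((i + s + 1).choose i : ℕ)) : ℝ)^2 := by
      rw [aux_rayleigh]
      have : ∀ i : Fin m, (T.mulVec v i)^2
          = (fun i => (1/(m:ℝ)) * ((((i + s + 1).choose i : ℕ)) : ℝ)^2) (i:ℕ) := by
        intro i
        rw [hmulvec i]
        rw [mul_pow, inv_pow, hsm]
        simp [div_eq_inv_mul]
      rw [Finset.sum_congr rfl fun i _ => this i,
        Fin.sum_univ_eq_sum_range (fun i => (1/(m:ℝ)) * ((((i + s + 1).choose i : ℕ)) : ℝ)^2) m,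
        ← Finset.mul_sum]
    have hmem : (1/(m:ℝ)) * ∑ i ∈ range m, ((((i + s + 1).choose i : ℕ)) : ℝ)^2
        ∈ {x : ℝ | ∃ w : Fin m → ℝ, (∑ i, w i ^ 2) = 1 ∧ x = w ⬝ᵥ (Tᵀ * T).mulVec w} :=
      ⟨v, hvsum, hray.symm⟩
    have hle : (1/(m:ℝ)) * ∑ i ∈ range m, ((((i + s + 1).choose i : ℕ)) : ℝ)^2
        ≤ lambdaMax (Tᵀ * T) := le_csSup (aux_bdd (Tᵀ * T)) hmem
    refine le_trans ?_ hle
    -- lower bound the sum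
    set Bd : ℝ := ((m:ℝ)/2)^(s+1) / F with hBd
    have hBd0 : 0 ≤ Bd := by positivity
    have hsum1 : ∑ i ∈ Finset.Ico (m/2) m, Bd^2
        ≤ ∑ i ∈ Finset.Ico (m/2) m, ((((i + s + 1).choose i : ℕ)) : ℝ)^2 := by
      apply Finset.sum_le_sum
      intro i hi
      rw [Finset.mem_Ico] at hi
      have hci : ((m:ℝ)/2)^(s+1) ≤ ((((i + s + 1).choose i : ℕ)) : ℝ) * F := by
        have h1 : (i+1)^(s+1) ≤ (i + (s+1)).choose (s+1) * (s+1).factorial :=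
          aux_pow_le_choose (s+1) i
        have h2 : (i + (s+1)).choose (s+1) = (i + s + 1).choose i := by
          rw [show i + (s+1) = i + s + 1 from by omega]
          rw [show i + s + 1 = i + (s+1) from by omega, Nat.choose_symm_add,
            show i + (s+1) = i + s + 1 from by omega]
        rw [h2] at h1
        have h3 : ((i:ℝ)+1)^(s+1) ≤ ((((i + s + 1).choose i : ℕ)) : ℝ) * F := by
          rw [hF]; exact_mod_cast h1
        refine le_trans ?_ h3
        apply pow_le_pow_left₀ (by positivity)
        have : (m:ℝ) ≤ 2*(i:ℝ)+2 := by exact_mod_cast (show m ≤ 2*i+2 from by omega)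
        linarith
      have : Bd ≤ ((((i + s + 1).choose i : ℕ)) : ℝ) := by
        rw [hBd, div_le_iff₀ hF0]
        exact hci
      exact pow_le_pow_left₀ hBd0 this 2
    have hsum2 : ((m:ℝ)/2) * Bd^2
        ≤ ∑ i ∈ Finset.Ico (m/2) m, ((((i + s + 1).choose i : ℕ)) : ℝ)^2 := by
      refine le_trans ?_ hsum1
      rw [Finset.sum_const, Nat.card_Ico, nsmul_eq_mul]
      apply mul_le_mul_of_nonneg_right _ (by positivity)
      have : m ≤ 2 * (m - m/2) := by omega
      have h4 : (m:ℝ) ≤ 2 * ((m - m/2 : ℕ) : ℝ) := by exact_mod_cast this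
      linarith
    have hsum3 : ∑ i ∈ Finset.Ico (m/2) m, ((((i + s + 1).choose i : ℕ)) : ℝ)^2
        ≤ ∑ i ∈ range m, ((((i + s + 1).choose i : ℕ)) : ℝ)^2 := by
      apply Finset.sum_le_sum_of_subset_of_nonneg
      · intro x hx; rw [Finset.mem_Ico] at hx; rw [Finset.mem_range]; omega
      · intro i _ _; positivity
    calc (1 / (2^(2*s+3) * F^2)) * (m:ℝ)^(2*(s+1))
        ≤ (1/(m:ℝ)) * (((m:ℝ)/2) * Bd^2) := by
          have e1 : Bd^2 = (m:ℝ)^(2*s+2) / (2^(2*s+2) * F^2) := by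
            rw [hBd, div_pow, ← pow_mul, show (s+1)*2 = 2*s+2 from by ring, div_pow, div_div]
          rw [e1, show 2*(s+1) = 2*s+2 from by ring]
          apply le_of_eq
          field_simp
          ring
    _ ≤ (1/(m:ℝ)) * ∑ i ∈ range m, ((((i + s + 1).choose i : ℕ)) : ℝ)^2 := by
          apply mul_le_mul_of_nonneg_left (le_trans hsum2 hsum3) (by positivity)
end
end

section
/- For every a > 0, every integer k ≥ 0, and every real ω, the Fourier transform of the Laguerre function satisfies ∫_0^∞ e^{iωx} φ_k(x) dx = (−1)^k √(2a) (a + iω)^k / (a − iω)^{k+1}. -/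
open MeasureTheory Matrix Finset Filter Topology

noncomputable section

section FTLaux
open MeasureTheory Set Filter Topology

lemma aux_hasDeriv (c : ℂ) (x : ℝ) :
    HasDerivAt (fun x : ℝ => Complex.exp (-(c * x))) (-c * Complex.exp (-(c * x))) x := by
  have h1 : HasDerivAt (fun x : ℝ => -(c * (x : ℂ))) (-c) x := by
    simpa [Pi.neg_def] using ((Complex.ofRealCLM.hasDerivAt (x := x)).const_mul c).neg
  simpa [mul_comm] using h1.cexp

lemma aux_integrable (c : ℂ) (hc : 0 < c.re) (j : ℕ) :
    IntegrableOn (fun x : ℝ => (x : ℂ) ^ j * Complex.exp (-(c * x))) (Set.Ioi 0) := by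
  have h1 : IntegrableOn (fun x : ℝ => x ^ j * Real.exp (-(c.re * x))) (Set.Ioi 0) := by
    have h := integrableOn_rpow_mul_exp_neg_mul_rpow (p := 1) (s := (j : ℝ))
      (b := c.re) (by exact_mod_cast neg_one_lt_zero.trans_le (Nat.cast_nonneg j)) one_pos hc
    refine h.congr_fun (fun x hx => ?_) measurableSet_Ioi
    dsimp only; rw [Real.rpow_natCast, Real.rpow_one, neg_mul]
  refine Integrable.mono' h1 ?_ ?_
  · exact (Continuous.mul (by continuity) (by continuity)).aestronglyMeasurable
  · filter_upwards [ae_restrict_mem measurableSet_Ioi] with x hx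
    have hx0 : (0:ℝ) < x := hx
    rw [norm_mul, norm_pow, Complex.norm_exp]
    simp [abs_of_pos hx0, Complex.ofReal_mul, hx0.le]

lemma aux_tendsto (c : ℂ) (hc : 0 < c.re) (j : ℕ) :
    Tendsto (fun x : ℝ => (x : ℂ) ^ j * Complex.exp (-(c * x))) atTop (𝓝 0) := by
  rw [tendsto_zero_iff_norm_tendsto_zero]
  have h0 : Tendsto (fun x : ℝ => (c.re * x) ^ j * Real.exp (-(c.re * x))) atTop (𝓝 0) :=
    (Real.tendsto_pow_mul_exp_neg_atTop_nhds_zero j).comp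
      (tendsto_id.const_mul_atTop hc)
  have h1 : Tendsto (fun x : ℝ => (c.re)⁻¹ ^ j * ((c.re * x) ^ j * Real.exp (-(c.re * x))))
      atTop (𝓝 0) := by simpa using h0.const_mul ((c.re)⁻¹ ^ j)
  have h2 : Tendsto (fun x : ℝ => x ^ j * Real.exp (-(c.re * x))) atTop (𝓝 0) := by
    refine h1.congr fun x => ?_
    rw [mul_pow, ← mul_assoc, ← mul_assoc, ← mul_pow, inv_mul_cancel₀ hc.ne']
    simp
  refine (squeeze_zero_norm' ?_ h2)
  filter_upwards [eventually_ge_atTop (0:ℝ)] with x hx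
  rw [norm_norm, norm_mul, norm_pow, Complex.norm_exp]
  simp [abs_of_nonneg hx, Complex.neg_re, Complex.mul_re]

lemma aux_integral (c : ℂ) (hc : 0 < c.re) (j : ℕ) :
    ∫ x in Set.Ioi (0:ℝ), (x : ℂ) ^ j * Complex.exp (-(c * x)) =
      (Nat.factorial j : ℂ) / c ^ (j + 1) := by
  have hc0 : c ≠ 0 := fun h => by simp [h] at hc
  induction j with
  | zero =>
    have hder : ∀ x ∈ Set.Ici (0:ℝ),
        HasDerivAt (fun x : ℝ => -Complex.exp (-(c * x)) / c)
          ((fun x : ℝ => (x:ℂ) ^ 0 * Complex.exp (-(c * x))) x) x := by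
      intro x _
      have := ((aux_hasDeriv c x).neg).div_const c
      simpa [neg_mul, neg_neg, mul_div_assoc, mul_div_cancel_left₀ _ hc0] using this
    have htend : Tendsto (fun x : ℝ => -Complex.exp (-(c * x)) / c) atTop (𝓝 0) := by
      have := ((aux_tendsto c hc 0).neg).div_const c
      simpa using this
    rw [integral_Ioi_of_hasDerivAt_of_tendsto' hder (aux_integrable c hc 0) htend]
    simp [Nat.factorial]
    ring
  | succ j ih =>
    have hu : ∀ x ∈ Set.Ioi (0:ℝ),
        HasDerivAt (fun x : ℝ => ((x:ℂ)) ^ (j+1)) (((j:ℂ)+1) * (x:ℂ) ^ j) x := by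
      intro x _
      have := (hasDerivAt_pow (j+1) ((x:ℝ):ℂ)).comp_ofReal
      simpa using this
    have hv : ∀ x ∈ Set.Ioi (0:ℝ),
        HasDerivAt (fun x : ℝ => -Complex.exp (-(c * x)) / c)
          (Complex.exp (-(c * x))) x := by
      intro x _
      have := ((aux_hasDeriv c x).neg).div_const c
      simpa [neg_mul, neg_neg, mul_div_assoc, mul_div_cancel_left₀ _ hc0] using this
    have huv' : IntegrableOn
        (fun x : ℝ => (x:ℂ) ^ (j+1) * Complex.exp (-(c * x))) (Set.Ioi 0) :=
      aux_integrable c hc (j+1)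
    have hu'v : IntegrableOn
        (fun x : ℝ => ((j:ℂ)+1) * (x:ℂ) ^ j * (-Complex.exp (-(c * x)) / c)) (Set.Ioi 0) := by
      have h := (aux_integrable c hc j).const_mul (-((j:ℂ)+1) / c)
      exact IntegrableOn.congr_fun h (fun x _ => by ring) measurableSet_Ioi
    have h_zero : Tendsto (fun x : ℝ => (x:ℂ) ^ (j+1) * (-Complex.exp (-(c * x)) / c))
        (𝓝[>] (0:ℝ)) (𝓝 0) := by
      have hcont : ContinuousAt (fun x : ℝ => (x:ℂ) ^ (j+1) * (-Complex.exp (-(c * x)) / c)) 0 := by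
        fun_prop
      have h2 : Tendsto (fun x : ℝ => (x:ℂ) ^ (j+1) * (-Complex.exp (-(c * x)) / c))
          (𝓝[>] (0:ℝ)) (𝓝 ((0:ℂ) ^ (j+1) * (-Complex.exp (-(c * (0:ℝ))) / c))) :=
        (hcont.tendsto).mono_left nhdsWithin_le_nhds
      simpa using h2
    have h_infty : Tendsto (fun x : ℝ => (x:ℂ) ^ (j+1) * (-Complex.exp (-(c * x)) / c))
        atTop (𝓝 0) := by
      have := (aux_tendsto c hc (j+1)).mul_const (-1/c)
      simp only [zero_mul] at this
      refine this.congr fun x => ?_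
      ring
    have key := integral_Ioi_mul_deriv_eq_deriv_mul hu hv huv' hu'v h_zero h_infty
    rw [key]
    have hpt : ∀ x : ℝ, ((j:ℂ)+1) * (x:ℂ) ^ j * (-Complex.exp (-(c * x)) / c)
        = (-((j:ℂ)+1)/c) * ((x:ℂ) ^ j * Complex.exp (-(c * x))) := fun x => by ring
    simp only [hpt]
    rw [MeasureTheory.integral_const_mul, ih, Nat.factorial_succ]
    push_cast
    field_simp
    ring

end FTLaux

open LapDeconv in
/-- Fourier transform of the Laguerre function:
`∫_0^∞ e^{iωx} φ_k(x) dx = (-1)^k √(2a) (a + iω)^k / (a - iω)^{k+1}`. -/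
theorem fourier_transform_laguerre
    (a : ℝ) (ha : 0 < a) (k : ℕ) (ω : ℝ) :
    ∫ x in Set.Ioi (0 : ℝ), Complex.exp (Complex.I * ω * x) * (lagFun a k x : ℂ) =
      (-1 : ℂ) ^ k * (Real.sqrt (2 * a) : ℂ) *
        ((a : ℂ) + Complex.I * ω) ^ k / ((a : ℂ) - Complex.I * ω) ^ (k + 1) := by
  set c : ℂ := (a:ℂ) - Complex.I * ω with hc_def
  have hcre : 0 < c.re := by
    simp [hc_def, Complex.sub_re, Complex.mul_re, ha]
  have hc0 : c ≠ 0 := fun h => by simp [h] at hcre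
  have hfac : ∀ j : ℕ, (Nat.factorial j : ℂ) ≠ 0 :=
    fun j => Nat.cast_ne_zero.mpr (Nat.factorial_ne_zero j)
  have key : ∀ x : ℝ, Complex.exp (Complex.I * ω * x) * (lagFun a k x : ℂ)
      = ∑ j ∈ Finset.range (k+1),
          ((-1:ℂ)^j * (k.choose j : ℂ) * (2*(a:ℂ))^j / (Nat.factorial j : ℂ)
              * (Real.sqrt (2*a) : ℂ))
            * ((x:ℂ)^j * Complex.exp (-(c * x))) := by
    intro x
    have hx : Complex.exp (Complex.I*ω*x) * Complex.exp (-((a:ℂ)*x))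
        = Complex.exp (-(c*x)) := by
      rw [← Complex.exp_add]; congr 1; rw [hc_def]; ring
    simp only [lagFun, laguerreL]
    push_cast
    rw [← hx]
    simp only [Finset.mul_sum, Finset.sum_mul]
    refine Finset.sum_congr rfl fun j hj => ?_
    ring
  rw [MeasureTheory.setIntegral_congr_fun measurableSet_Ioi (fun x _ => key x)]
  rw [MeasureTheory.integral_finset_sum _
    (fun j _ => (aux_integrable c hcre j).const_mul _)]
  simp only [MeasureTheory.integral_const_mul, aux_integral c hcre]
  have hbin : ((-(2*(a:ℂ))) + c)^k
      = ∑ j ∈ Finset.range (k+1), (-(2*(a:ℂ)))^j * c^(k-j) * (k.choose j : ℂ) :=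
    add_pow _ _ k
  have hstep : ∑ j ∈ Finset.range (k+1),
      ((-1:ℂ)^j * (k.choose j : ℂ) * (2*(a:ℂ))^j / (Nat.factorial j : ℂ)
          * (Real.sqrt (2*a) : ℂ)) * ((Nat.factorial j : ℂ) / c^(j+1))
      = ∑ j ∈ Finset.range (k+1),
        ((-(2*(a:ℂ)))^j * c^(k-j) * (k.choose j : ℂ)) * (Real.sqrt (2*a) : ℂ) / c^(k+1) := by
    refine Finset.sum_congr rfl fun j hj => ?_
    have hjk : j ≤ k := Nat.lt_succ_iff.mp (Finset.mem_range.mp hj)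
    have hsplit : c^(k+1) = c^(k-j) * c^(j+1) := by
      rw [← pow_add]; congr 1; omega
    rw [hsplit]
    field_simp [hfac j]
    have h2 : (-(2*(a:ℂ)))^j = (-1:ℂ)^j * (2*(a:ℂ))^j := by
      rw [← neg_one_mul, mul_pow]
    rw [h2]
    ring
  rw [hstep, ← Finset.sum_div, ← Finset.sum_mul, ← hbin]
  have hneg : (-(2*(a:ℂ)) + c) = -((a:ℂ) + Complex.I * ω) := by rw [hc_def]; ring
  rw [hneg, neg_pow]
  ring
end
end
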